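/- For every real number x with 0 < |x| < 2π, the series ∑_{k≥1} (2 ζ(2k) (-1)^k / (2k (2π)^{2k})) x^{2k} converges and equals log(x/(1−e^{−x})) − x/2. (This is the paper's identity log(x/(1−e^{−x})) − x/2 = ∑_{k≥1} 2ζ(2k) x^{2k} / (2k (2πi)^{2k}), using (2πi)^{2k} = (−1)^k (2π)^{2k}.) -/

import Mathlib

open Real

/-- The Riemann zeta value `ζ(n) = ∑_{m ≥ 1} 1/m^n`, as a real number. -/
noncomputable def zetaVal (n : ℕ) : ℝ := ∑' m : ℕ, 1 / ((m : ℝ) + 1) ^ n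

open Filter Finset Topology

lemma sinh_prod_aux (t : ℝ) (ht : t ≠ 0) :
    Tendsto (fun n : ℕ => ∏ j ∈ Finset.range n, (1 + t ^ 2 / (π ^ 2 * ((j : ℝ) + 1) ^ 2)))
      atTop (𝓝 (Real.sinh t / t)) := by
  have hπ : (π : ℂ) ≠ 0 := by exact_mod_cast Real.pi_ne_zero
  have h := Complex.tendsto_euler_sin_prod ((t : ℂ) * Complex.I / (π : ℂ))
  have heq : ∀ n : ℕ, ((π : ℂ) * ((t : ℂ) * Complex.I / (π : ℂ)) *
      ∏ j ∈ Finset.range n, ((1 : ℂ) - ((t : ℂ) * Complex.I / (π : ℂ)) ^ 2 / ((j : ℂ) + 1) ^ 2))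
      = (t : ℂ) * Complex.I *
        ((∏ j ∈ Finset.range n, (1 + t ^ 2 / (π ^ 2 * ((j : ℝ) + 1) ^ 2)) : ℝ) : ℂ) := by
    intro n
    rw [Complex.ofReal_prod, mul_div_assoc', mul_comm (π : ℂ), mul_div_assoc, div_self hπ,
      mul_one]
    congr 1
    refine Finset.prod_congr rfl fun j _ => ?_
    have hz : ((t : ℂ) * Complex.I / (π : ℂ)) ^ 2 = -((t : ℂ) ^ 2 / (π : ℂ) ^ 2) := by
      rw [div_pow, mul_pow, Complex.I_sq]; ring
    have hj : ((j : ℂ) + 1) ≠ 0 := Nat.cast_add_one_ne_zero j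
    rw [hz]
    push_cast
    field_simp
    ring
  rw [funext heq] at h
  have hsin : Complex.sin ((π : ℂ) * ((t : ℂ) * Complex.I / (π : ℂ)))
      = (Real.sinh t : ℂ) * Complex.I := by
    rw [mul_div_assoc', mul_comm, mul_div_assoc, div_self hπ, mul_one, Complex.sin_mul_I,
      Complex.ofReal_sinh]
  rw [hsin] at h
  have him := (Complex.continuous_im.tendsto _).comp h
  simp only [Function.comp_def] at him
  have e1 : ∀ n : ℕ, ((t : ℂ) * Complex.I *
      ((∏ j ∈ Finset.range n, (1 + t ^ 2 / (π ^ 2 * ((j : ℝ) + 1) ^ 2)) : ℝ) : ℂ)).im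
      = t * ∏ j ∈ Finset.range n, (1 + t ^ 2 / (π ^ 2 * ((j : ℝ) + 1) ^ 2)) := by
    intro n
    rw [Complex.mul_im, Complex.ofReal_re, Complex.ofReal_im, mul_zero, zero_add,
      Complex.mul_I_im, Complex.ofReal_re]
  have e2 : (((Real.sinh t : ℝ) : ℂ) * Complex.I).im = Real.sinh t := by
    rw [Complex.mul_I_im, Complex.ofReal_re]
  have him' : Tendsto (fun n : ℕ =>
      t * ∏ j ∈ Finset.range n, (1 + t ^ 2 / (π ^ 2 * ((j : ℝ) + 1) ^ 2))) atTop
      (𝓝 (Real.sinh t)) := by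
    rw [← e2]
    exact him.congr e1
  exact (him'.div_const t).congr fun n => mul_div_cancel_left₀ _ ht

lemma key (t : ℝ) (ht : t ≠ 0) (ht2 : |t| < π) :
    HasSum (fun k : ℕ => (-1) ^ (k + 1) * zetaVal (2 * (k + 1)) * (t ^ 2 / π ^ 2) ^ (k + 1)
        / ((k : ℝ) + 1))
      (- Real.log (Real.sinh t / t)) := by
  have hπ : (0 : ℝ) < π := Real.pi_pos
  set u : ℕ → ℝ := fun j => t ^ 2 / (π ^ 2 * ((j : ℝ) + 1) ^ 2) with hu_def
  have ht2' : t ^ 2 < π ^ 2 := by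
    have := abs_lt.mp ht2
    nlinarith [this.1, this.2]
  have hupos : ∀ j, 0 < u j := by
    intro j
    apply div_pos (by positivity)
    positivity
  have hule : ∀ j, u j ≤ t ^ 2 / π ^ 2 := by
    intro j
    have h1 : π ^ 2 ≤ π ^ 2 * (((j : ℝ)) + 1) ^ 2 := by
      nlinarith [sq_nonneg ((j : ℝ)), Nat.cast_nonneg (α := ℝ) j]
    exact div_le_div_of_nonneg_left (by positivity) (by positivity) h1
  have hufac : ∀ j : ℕ, u j = (t ^ 2 / π ^ 2) * (1 / ((j : ℝ) + 1) ^ 2) := by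
    intro j
    rw [hu_def, div_mul_div_comm, mul_one]
  have hu1 : ∀ j, u j < 1 := by
    intro j
    calc u j ≤ t ^ 2 / π ^ 2 := hule j
    _ < 1 := by rw [div_lt_one (by positivity)]; exact ht2'
  -- positivity of sinh t / t
  have hst : 0 < Real.sinh t / t := by
    rcases lt_or_gt_of_ne ht with h | h
    · have : Real.sinh t < 0 := by rwa [← Real.sinh_zero, Real.sinh_lt_sinh]
      exact div_pos_of_neg_of_neg this h
    · have : 0 < Real.sinh t := by rwa [← Real.sinh_zero, Real.sinh_lt_sinh]
      exact div_pos this h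
  -- Step B : sum of logs
  have hprod := sinh_prod_aux t ht
  have hlogsum : Tendsto (fun n : ℕ => ∑ j ∈ Finset.range n, Real.log (1 + u j)) atTop
      (𝓝 (Real.log (Real.sinh t / t))) := by
    have hcont := (Real.continuousAt_log (ne_of_gt hst)).tendsto.comp hprod
    refine hcont.congr fun n => ?_
    rw [Function.comp_apply, Real.log_prod]
    intro j _
    have := hupos j
    positivity
  have hlognonneg : ∀ j, 0 ≤ Real.log (1 + u j) := fun j =>
    Real.log_nonneg (by linarith [hupos j])
  have hmono : Monotone (fun n : ℕ => ∑ j ∈ Finset.range n, Real.log (1 + u j)) :=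
    monotone_nat_of_le_succ fun n => by
      rw [Finset.sum_range_succ]; linarith [hlognonneg n]
  have hsummB : Summable (fun j => Real.log (1 + u j)) :=
    summable_of_sum_range_le hlognonneg fun n => hmono.ge_of_tendsto hlogsum n
  have hB : HasSum (fun j => Real.log (1 + u j)) (Real.log (Real.sinh t / t)) := by
    rw [hsummB.hasSum_iff_tendsto_nat]
    exact hlogsum
  -- Step C : per-j log series
  have hC : ∀ j, HasSum (fun k : ℕ => (-(u j)) ^ (k + 1) / ((k : ℝ) + 1))
      (- Real.log (1 + u j)) := by
    intro j
    have habs : |(-(u j))| < 1 := by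
      rw [abs_neg, abs_of_pos (hupos j)]; exact hu1 j
    have := Real.hasSum_pow_div_log_of_abs_lt_one habs
    rwa [sub_neg_eq_add] at this
  have hCa : ∀ j, HasSum (fun k : ℕ => (u j) ^ (k + 1) / ((k : ℝ) + 1))
      (- Real.log (1 - u j)) := by
    intro j
    have habs : |u j| < 1 := by rw [abs_of_pos (hupos j)]; exact hu1 j
    exact Real.hasSum_pow_div_log_of_abs_lt_one habs
  -- summability of double sum
  have hbase : Summable (fun j : ℕ => 1 / ((j : ℝ) + 1) ^ 2) := by
    have := (summable_nat_add_iff (f := fun n : ℕ => 1 / (n : ℝ) ^ 2) 1).mpr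
      (summable_one_div_nat_pow.mpr one_lt_two)
    exact this.congr fun j => by push_cast; ring_nf
  have hsumlog : Summable (fun j => - Real.log (1 - u j)) := by
    apply Summable.of_nonneg_of_le (fun j => ?_) (fun j => ?_)
      ((hbase.mul_left ((t ^ 2 / π ^ 2) / (1 - t ^ 2 / π ^ 2))))
    · rw [neg_nonneg]
      exact Real.log_nonpos (by linarith [hu1 j]) (by linarith [hupos j])
    · have h1u : 0 < 1 - u j := by linarith [hu1 j]
      have h1u0 : 0 < 1 - t ^ 2 / π ^ 2 := by
        rw [sub_pos, div_lt_one (by positivity)]; exact ht2'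
      have hlog : - Real.log (1 - u j) ≤ u j / (1 - u j) := by
        have := Real.log_le_sub_one_of_pos (x := (1 - u j)⁻¹) (by positivity)
        rw [Real.log_inv] at this
        have : -Real.log (1 - u j) ≤ (1 - u j)⁻¹ - 1 := this
        calc -Real.log (1 - u j) ≤ (1 - u j)⁻¹ - 1 := this
        _ = u j / (1 - u j) := by field_simp; ring
      calc - Real.log (1 - u j) ≤ u j / (1 - u j) := hlog
      _ ≤ u j / (1 - t ^ 2 / π ^ 2) := by
          exact div_le_div_of_nonneg_left (hupos j).le h1u0 (by linarith [hule j])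
      _ = (t ^ 2 / π ^ 2 / (1 - t ^ 2 / π ^ 2)) * (1 / ((j : ℝ) + 1) ^ 2) := by
          rw [hufac j]; ring
  have hGabs : Summable (fun p : ℕ × ℕ => (u p.1) ^ (p.2 + 1) / ((p.2 : ℝ) + 1)) := by
    rw [summable_prod_of_nonneg (fun p => by positivity)]
    refine ⟨fun j => (hCa j).summable, ?_⟩
    exact hsumlog.congr fun j => ((hCa j).tsum_eq).symm
  have hG : Summable (fun p : ℕ × ℕ => (-(u p.1)) ^ (p.2 + 1) / ((p.2 : ℝ) + 1)) := by
    rw [← summable_abs_iff]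
    refine hGabs.congr fun p => ?_
    rw [abs_div, abs_pow, abs_neg, abs_of_pos (hupos p.1), abs_of_pos]
    positivity
  set G : ℕ × ℕ → ℝ := fun p => (-(u p.1)) ^ (p.2 + 1) / ((p.2 : ℝ) + 1) with hG_def
  have hGS : HasSum G (∑' p, G p) := hG.hasSum
  -- fiber over first coordinate
  have hfib1 : HasSum (fun j => - Real.log (1 + u j)) (∑' p, G p) :=
    hGS.prod_fiberwise fun j => hC j
  have hSval : (∑' p, G p) = - Real.log (Real.sinh t / t) :=
    hfib1.unique hB.neg
  -- swap coordinates
  have hGswap : HasSum (fun p : ℕ × ℕ => (-(u p.2)) ^ (p.1 + 1) / ((p.1 : ℝ) + 1)) (∑' p, G p) := by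
    have := ((Equiv.prodComm ℕ ℕ).hasSum_iff (f := G) (a := ∑' p, G p)).mpr hGS
    exact this
  -- zeta summands
  have hzeta : ∀ k : ℕ, HasSum (fun j : ℕ => 1 / ((j : ℝ) + 1) ^ (2 * (k + 1)))
      (zetaVal (2 * (k + 1))) := by
    intro k
    have hs : Summable (fun j : ℕ => 1 / ((j : ℝ) + 1) ^ (2 * (k + 1))) := by
      apply Summable.of_nonneg_of_le (fun j => by positivity) (fun j => ?_) hbase
      apply div_le_div_of_nonneg_left one_pos.le (by positivity)
      apply pow_le_pow_right₀ (by linarith [Nat.cast_nonneg (α := ℝ) j])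
      omega
    exact hs.hasSum
  have hfib2 : HasSum (fun k : ℕ => (-1) ^ (k + 1) * zetaVal (2 * (k + 1))
      * (t ^ 2 / π ^ 2) ^ (k + 1) / ((k : ℝ) + 1)) (∑' p, G p) := by
    apply hGswap.prod_fiberwise
    intro k
    have h2 := (hzeta k).mul_left ((-1 : ℝ) ^ (k + 1) * (t ^ 2 / π ^ 2) ^ (k + 1) / ((k : ℝ) + 1))
    have hfun : ∀ j : ℕ, ((-1 : ℝ) ^ (k + 1) * (t ^ 2 / π ^ 2) ^ (k + 1) / ((k : ℝ) + 1))
        * (1 / ((j : ℝ) + 1) ^ (2 * (k + 1))) = (-(u j)) ^ (k + 1) / ((k : ℝ) + 1) := by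
      intro j
      have hneg : -(u j) = (-1 : ℝ) * (t ^ 2 / π ^ 2) * (((j : ℝ) + 1) ^ 2)⁻¹ := by
        rw [hufac j]; ring
      have hupow : (-(u j)) ^ (k + 1)
          = (-1 : ℝ) ^ (k + 1) * (t ^ 2 / π ^ 2) ^ (k + 1)
            * (1 / ((j : ℝ) + 1) ^ (2 * (k + 1))) := by
        rw [hneg, mul_pow, mul_pow, ← inv_pow, ← pow_mul, one_div, inv_pow]
      rw [hupow]; ring
    have h3 : HasSum (fun j : ℕ => (-(u j)) ^ (k + 1) / ((k : ℝ) + 1))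
        (((-1 : ℝ) ^ (k + 1) * (t ^ 2 / π ^ 2) ^ (k + 1) / ((k : ℝ) + 1))
          * zetaVal (2 * (k + 1))) := by
      simpa only [hfun] using h2
    convert h3 using 1
    ring
  rw [hSval] at hfib2
  exact hfib2

theorem stmt0 (x : ℝ) (hx : 0 < |x|) (hx2 : |x| < 2 * π) :
    HasSum
      (fun k : ℕ =>
        2 * zetaVal (2 * (k + 1)) * (-1) ^ (k + 1)
            / ((2 * ((k : ℝ) + 1)) * (2 * π) ^ (2 * (k + 1)))
          * x ^ (2 * (k + 1)))
      (Real.log (x / (1 - Real.exp (-x))) - x / 2) := by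
  have hx0 : x ≠ 0 := abs_pos.mp hx
  have ht : x / 2 ≠ 0 := div_ne_zero hx0 two_ne_zero
  have ht2 : |x / 2| < π := by
    rw [abs_div, abs_two]
    linarith
  have hkey := key (x / 2) ht ht2
  have hsinh_ne : Real.sinh (x / 2) ≠ 0 := Real.sinh_ne_zero.mpr ht
  have e1 : Real.exp (-(x / 2)) * Real.exp (x / 2) = 1 := by
    rw [← Real.exp_add]; simp
  have e2 : Real.exp (-(x / 2)) * Real.exp (-(x / 2)) = Real.exp (-x) := by
    rw [← Real.exp_add]; ring_nf
  have h1 : 1 - Real.exp (-x) = Real.exp (-(x / 2)) * (2 * Real.sinh (x / 2)) := by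
    rw [Real.sinh_eq]
    linear_combination e2 - e1
  have h2 : x / (1 - Real.exp (-x)) = Real.exp (x / 2) * ((x / 2) / Real.sinh (x / 2)) := by
    rw [h1, Real.exp_neg]
    field_simp
  have hval : Real.log (x / (1 - Real.exp (-x))) - x / 2
      = - Real.log (Real.sinh (x / 2) / (x / 2)) := by
    rw [h2, Real.log_mul (Real.exp_ne_zero _) (div_ne_zero ht hsinh_ne), Real.log_exp,
      ← Real.log_inv, inv_div]
    ring
  rw [hval]
  have hfun : ∀ k : ℕ,
      (-1 : ℝ) ^ (k + 1) * zetaVal (2 * (k + 1)) * ((x / 2) ^ 2 / π ^ 2) ^ (k + 1) / ((k : ℝ) + 1)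
      = 2 * zetaVal (2 * (k + 1)) * (-1) ^ (k + 1)
          / ((2 * ((k : ℝ) + 1)) * (2 * π) ^ (2 * (k + 1))) * x ^ (2 * (k + 1)) := by
    intro k
    have hk1 : ((k : ℝ) + 1) ≠ 0 := by positivity
    have h2π : (2 * π) ≠ 0 := by positivity
    have hb : ((x / 2) ^ 2 / π ^ 2) = x ^ 2 / (2 * π) ^ 2 := by
      field_simp
    rw [hb, div_pow, ← pow_mul, ← pow_mul]
    have hpow : ((2 : ℝ) * π) ^ (2 * (k + 1)) ≠ 0 := pow_ne_zero _ h2π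
    field_simp
  exact (funext hfun ▸ hkey)
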